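/- Let d ≥ 1 and let v₁, …, v_{d+1} ∈ ℝ^d satisfy ‖v_i‖ = 1 for all i and ⟪v_i, v_j⟫ = −1/d for all i ≠ j (the vertices of a regular d-simplex centered at the origin with vertices at unit distance from the origin). Then for every point p ∈ ℝ^d there exists a unit vector r ∈ ℝ^d such that ⟪v_i, r⟫ ≤ ⟪p, r⟫ − 1/d holds for at least d of the d+1 indices i. -/

import Mathlib

open scoped InnerProductSpace
open scoped Classical

theorem simplex_direction_lemma {d : ℕ} (hd : 1 ≤ d)
    (v : Fin (d + 1) → EuclideanSpace ℝ (Fin d))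
    (hnorm : ∀ i, ‖v i‖ = 1)
    (hinner : ∀ i j, i ≠ j → ⟪v i, v j⟫_ℝ = -1 / d)
    (p : EuclideanSpace ℝ (Fin d)) :
    ∃ r : EuclideanSpace ℝ (Fin d), ‖r‖ = 1 ∧
      d ≤ (Finset.univ.filter fun i => ⟪v i, r⟫_ℝ ≤ ⟪p, r⟫_ℝ - 1 / d).card := by
  have hd0 : (d : ℝ) ≠ 0 := Nat.cast_ne_zero.mpr (by omega)
  have hself : ∀ i, ⟪v i, v i⟫_ℝ = 1 := by
    intro i
    rw [real_inner_self_eq_norm_sq, hnorm i, one_pow]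
  have hrow : ∀ i : Fin (d + 1), ∑ j, ⟪v i, v j⟫_ℝ = 0 := by
    intro i
    rw [← Finset.add_sum_erase _ _ (Finset.mem_univ i), hself i]
    have : ∑ j ∈ Finset.univ.erase i, ⟪v i, v j⟫_ℝ
        = ∑ j ∈ Finset.univ.erase i, (-1 / d : ℝ) := by
      refine Finset.sum_congr rfl fun j hj => ?_
      exact hinner i j (Ne.symm (Finset.mem_erase.mp hj).1)
    rw [this, Finset.sum_const, Finset.card_erase_of_mem (Finset.mem_univ i),
      Finset.card_univ, Fintype.card_fin]
    simp only [Nat.add_sub_cancel, nsmul_eq_mul]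
    field_simp
    norm_num
  have hsum : ∑ i, v i = 0 := by
    have h : ⟪∑ i, v i, ∑ i, v i⟫_ℝ = 0 := by
      rw [sum_inner]
      calc ∑ i, ⟪v i, ∑ j, v j⟫_ℝ = ∑ i, ∑ j, ⟪v i, v j⟫_ℝ := by
            refine Finset.sum_congr rfl fun i _ => ?_
            rw [inner_sum]
        _ = 0 := Finset.sum_eq_zero fun i _ => hrow i
    exact inner_self_eq_zero.mp h
  have hpsum : ∑ i, ⟪p, v i⟫_ℝ = 0 := by
    rw [← inner_sum, hsum, inner_zero_right]
  have hk : ∃ k : Fin (d + 1), 0 ≤ ⟪p, v k⟫_ℝ := by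
    by_contra h
    push_neg at h
    have : ∑ i, ⟪p, v i⟫_ℝ < 0 :=
      Finset.sum_neg (fun i _ => h i) ⟨0, Finset.mem_univ _⟩
    linarith
  obtain ⟨k, hk⟩ := hk
  refine ⟨v k, hnorm k, ?_⟩
  have hsub : Finset.univ.erase k ⊆
      Finset.univ.filter fun i => ⟪v i, v k⟫_ℝ ≤ ⟪p, v k⟫_ℝ - 1 / d := by
    intro i hi
    rw [Finset.mem_filter]
    refine ⟨Finset.mem_univ _, ?_⟩
    rw [hinner i k (Finset.mem_erase.mp hi).1]
    have : (0 : ℝ) < d := Nat.cast_pos.mpr (by omega)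
    rw [neg_div]
    linarith
  calc d = (Finset.univ.erase k).card := by
        rw [Finset.card_erase_of_mem (Finset.mem_univ k), Finset.card_univ,
          Fintype.card_fin, Nat.add_sub_cancel]
    _ ≤ _ := Finset.card_le_card hsub
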